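/- For no class C_j of the minimal commuting partition P_min^K does there exist a partition C_j = S_1 ∪ S_2 into nonempty disjoint sets such that E_r D_K E_s = 0 for all r ∈ S_1 and s ∈ S_2. -/

import Mathlib

open Matrix

def DKmat {n : ℕ} (K : Finset (Fin n)) : Matrix (Fin n) (Fin n) ℝ :=
  Matrix.of fun i j => if i = j ∧ i ∈ K then 1 else 0

def CommutesWithDK {n d : ℕ} (E : Fin (d + 1) → Matrix (Fin n) (Fin n) ℝ)
    (K : Finset (Fin n))
    (P : Finpartition (Finset.univ : Finset (Fin (d + 1)))) : Prop :=
  ∀ C ∈ P.parts, (∑ r ∈ C, E r) * DKmat K = DKmat K * (∑ r ∈ C, E r)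

/-- No class of the minimal commuting partition splits into two nonempty parts
`S₁, S₂` with `E_r D_K E_s = 0` for all `r ∈ S₁`, `s ∈ S₂`. -/
theorem no_class_splits {n d : ℕ} (A : Matrix (Fin n) (Fin n) ℝ)
    (θ : Fin (d + 1) → ℝ) (E : Fin (d + 1) → Matrix (Fin n) (Fin n) ℝ)
    (hA : A = ∑ r, θ r • E r) (hθ : Function.Injective θ)
    (hsymm : ∀ r, (E r).IsSymm)
    (hidem : ∀ r, E r * E r = E r)
    (horth : ∀ r s, r ≠ s → E r * E s = 0)
    (hsum : ∑ r, E r = 1)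
    (K : Finset (Fin n))
    (Pmin : Finpartition (Finset.univ : Finset (Fin (d + 1))))
    (hcomm : CommutesWithDK E K Pmin)
    (hmin : ∀ Q : Finpartition (Finset.univ : Finset (Fin (d + 1))),
      CommutesWithDK E K Q → Pmin ≤ Q)
    :
    ∀ C ∈ Pmin.parts,
      ¬ ∃ S₁ S₂ : Finset (Fin (d + 1)), S₁.Nonempty ∧ S₂.Nonempty ∧
          Disjoint S₁ S₂ ∧ S₁ ∪ S₂ = C ∧
          ∀ r ∈ S₁, ∀ s ∈ S₂, E r * DKmat K * E s = 0 := by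
  intro C hC
  rintro ⟨S₁, S₂, hne₁, hne₂, hdisj, hunion, hzero⟩
  set D := DKmat K with hDdef
  have hDsymm : Dᵀ = D := by
    ext i j
    simp only [hDdef, DKmat, transpose_apply, of_apply]
    by_cases h : i = j
    · subst h; rfl
    · rw [if_neg (fun hh => h hh.1.symm), if_neg (fun hh => h hh.1)]
  have hzero' : ∀ s ∈ S₂, ∀ r ∈ S₁, E s * D * E r = 0 := by
    intro s hs r hr
    have h := congrArg Matrix.transpose (hzero r hr s hs)
    rwa [Matrix.transpose_mul, Matrix.transpose_mul, hDsymm, hsymm r, hsymm s,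
      Matrix.transpose_zero, ← Matrix.mul_assoc] at h
  set W₁ := ∑ r ∈ S₁, E r with hW₁
  set W₂ := ∑ r ∈ S₂, E r with hW₂
  have sum3 : ∀ S T : Finset (Fin (d + 1)),
      (∑ r ∈ S, E r) * D * (∑ s ∈ T, E s) = ∑ r ∈ S, ∑ s ∈ T, E r * D * E s := by
    intro S T
    rw [Finset.sum_mul, Finset.sum_mul]
    exact Finset.sum_congr rfl fun r _ => Finset.mul_sum _ _ _
  have h12 : W₁ * D * W₂ = 0 := by
    rw [hW₁, hW₂, sum3]
    exact Finset.sum_eq_zero fun r hr => Finset.sum_eq_zero fun s hs => hzero r hr s hs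
  have h21 : W₂ * D * W₁ = 0 := by
    rw [hW₁, hW₂, sum3]
    exact Finset.sum_eq_zero fun s hs => Finset.sum_eq_zero fun r hr => hzero' s hs r hr
  have hsq : ∀ S : Finset (Fin (d + 1)), (∑ r ∈ S, E r) * (∑ s ∈ S, E s) = ∑ r ∈ S, E r := by
    intro S
    rw [Finset.sum_mul_sum]
    refine Finset.sum_congr rfl fun r hr => ?_
    rw [Finset.sum_eq_single r (fun b _ hb => horth r b (Ne.symm hb)) (fun h => absurd hr h),
      hidem r]
  have hW₁sq : W₁ * W₁ = W₁ := hsq S₁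
  have hW₁W₂ : W₁ * W₂ = 0 := by
    rw [hW₁, hW₂, Finset.sum_mul_sum]
    exact Finset.sum_eq_zero fun r hr => Finset.sum_eq_zero fun s hs =>
      horth r s (fun h => Finset.disjoint_left.1 hdisj hr (h ▸ hs))
  have hW₂W₁ : W₂ * W₁ = 0 := by
    rw [hW₁, hW₂, Finset.sum_mul_sum]
    exact Finset.sum_eq_zero fun s hs => Finset.sum_eq_zero fun r hr =>
      horth s r (fun h => Finset.disjoint_left.1 hdisj hr (h ▸ hs))
  have hCsum : ∑ r ∈ C, E r = W₁ + W₂ := by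
    rw [← hunion, Finset.sum_union hdisj]
  have hWD : (W₁ + W₂) * D = D * (W₁ + W₂) := by
    have := hcomm C hC
    rwa [hCsum] at this
  have hA1 : W₁ * D = W₁ * D * W₁ := by
    have h : W₁ * ((W₁ + W₂) * D) = W₁ * (D * (W₁ + W₂)) := by rw [hWD]
    rw [← Matrix.mul_assoc, Matrix.mul_add, hW₁sq, hW₁W₂, add_zero] at h
    rw [← Matrix.mul_assoc, Matrix.mul_add, h12, add_zero] at h
    exact h
  have hA2 : D * W₁ = W₁ * D * W₁ := by
    have h : (W₁ + W₂) * D * W₁ = D * ((W₁ + W₂) * W₁) := by rw [hWD, Matrix.mul_assoc]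
    rw [Matrix.add_mul, Matrix.add_mul, h21, add_zero, Matrix.add_mul, hW₁sq, hW₂W₁,
      add_zero] at h
    exact h.symm
  have hW₁D : W₁ * D = D * W₁ := hA1.trans hA2.symm
  have hW₂D : W₂ * D = D * W₂ := by
    have hw : W₂ = W₁ + W₂ - W₁ := (add_sub_cancel_left W₁ W₂).symm
    rw [hw, Matrix.sub_mul, Matrix.mul_sub, hWD, hW₁D]
  have hCne : C.Nonempty := hne₁.mono (hunion ▸ Finset.subset_union_left)
  have hS₁C : S₁ ⊆ C := hunion ▸ Finset.subset_union_left
  have hS₂C : S₂ ⊆ C := hunion ▸ Finset.subset_union_right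
  set parts : Finset (Finset (Fin (d + 1))) := insert S₁ (insert S₂ (Pmin.parts.erase C))
    with hparts
  have hdisjC : ∀ B ∈ Pmin.parts.erase C, Disjoint C B := fun B hB =>
    Pmin.disjoint hC (Finset.mem_of_mem_erase hB) (Ne.symm (Finset.ne_of_mem_erase hB))
  have hsupindep : parts.SupIndep id := by
    rw [Finset.supIndep_iff_pairwiseDisjoint]
    intro a ha b hb hab
    simp only [hparts, Finset.coe_insert, Set.mem_insert_iff, Finset.mem_coe] at ha hb
    rcases ha with rfl | rfl | ha <;> rcases hb with rfl | rfl | hb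
    · exact absurd rfl hab
    · exact hdisj
    · exact Finset.disjoint_of_subset_left hS₁C (hdisjC _ hb)
    · exact hdisj.symm
    · exact absurd rfl hab
    · exact Finset.disjoint_of_subset_left hS₂C (hdisjC _ hb)
    · exact (Finset.disjoint_of_subset_left hS₁C (hdisjC _ ha)).symm
    · exact (Finset.disjoint_of_subset_left hS₂C (hdisjC _ ha)).symm
    · exact Pmin.disjoint (Finset.mem_of_mem_erase ha) (Finset.mem_of_mem_erase hb) hab
  have hsup : parts.sup id = Finset.univ := by
    have h2 : C ⊔ (Pmin.parts.erase C).sup id = Finset.univ := by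
      have h3 := Pmin.sup_parts
      rw [← Finset.insert_erase hC, Finset.sup_insert] at h3
      simpa using h3
    rw [hparts, Finset.sup_insert, Finset.sup_insert, ← sup_assoc]
    simp only [id_eq]
    rw [show S₁ ⊔ S₂ = C from by rw [Finset.sup_eq_union, hunion]]
    exact h2
  have hnotbot : ⊥ ∉ parts := by
    simp only [hparts, Finset.mem_insert]
    push_neg
    exact ⟨fun h => hne₁.ne_empty h.symm, fun h => hne₂.ne_empty h.symm,
      fun h => Pmin.bot_notMem (Finset.mem_of_mem_erase h)⟩
  have hQcomm : CommutesWithDK E K ⟨parts, hsupindep, hsup, hnotbot⟩ := by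
    intro B hB
    have hB' : B ∈ parts := hB
    rw [hparts] at hB'
    simp only [Finset.mem_insert] at hB'
    rcases hB' with rfl | rfl | hB'
    · exact hW₁D
    · exact hW₂D
    · exact hcomm B (Finset.mem_of_mem_erase hB')
  obtain ⟨B, hB, hCB⟩ := hmin ⟨parts, hsupindep, hsup, hnotbot⟩ hQcomm hC
  have hB' : B ∈ parts := hB
  rw [hparts] at hB'
  simp only [Finset.mem_insert] at hB'
  have hCB' : C ⊆ B := hCB
  rcases hB' with rfl | rfl | hB'
  · obtain ⟨x, hx⟩ := hne₂
    exact Finset.disjoint_left.1 hdisj ((hS₂C.trans hCB') hx) hx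
  · obtain ⟨x, hx⟩ := hne₁
    exact Finset.disjoint_left.1 hdisj hx ((hS₁C.trans hCB') hx)
  · obtain ⟨x, hx⟩ := hCne
    exact Finset.disjoint_left.1 (hdisjC B hB') hx (hCB' hx)
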